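/- Let ρ ∈ (0, 1/2) and let f, g be negative real numbers. For ω > 0 define γ(ω) = (f + iωg + ω²)/(f + iωg), and define μ₋(ω) = (γ(ω) − √(γ(ω)² − 4ρ(1−ρ)))/(2ρ) and μ₊(ω) = (γ(ω) + √(γ(ω)² − 4ρ(1−ρ)))/(2ρ), where √ is the principal complex square root. Then, with κ = (1−ρ)/ρ: lim_{ω→0⁺} (μ₋(ω) − 1)/ω² = −1/((2ρ−1)|f|) and lim_{ω→0⁺} (μ₊(ω) − κ)/ω² = κ/((2ρ−1)|f|). (These are the leading terms of the Taylor expansions μ₋ = 1 − ω²/((2ρ−1)|f|) + O(ω³) and μ₊ = κ(1 + ω²/((2ρ−1)|f|)) + O(ω³).) -/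

import Mathlib

open Filter Topology

/-- `γ(ω) = (f + iωg + ω²)/(f + iωg)`. -/
noncomputable def gam (f g ω : ℝ) : ℂ :=
  ((f : ℂ) + Complex.I * ω * g + (ω : ℂ) ^ 2) / ((f : ℂ) + Complex.I * ω * g)

/-- `μ₋(ω)`, using the principal complex square root. -/
noncomputable def muMinus (ρ f g ω : ℝ) : ℂ :=
  (gam f g ω - (gam f g ω ^ 2 - 4 * (ρ : ℂ) * (1 - (ρ : ℂ))) ^ ((1 : ℂ) / 2)) / (2 * (ρ : ℂ))

/-- `μ₊(ω)`, using the principal complex square root. -/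
noncomputable def muPlus (ρ f g ω : ℝ) : ℂ :=
  (gam f g ω + (gam f g ω ^ 2 - 4 * (ρ : ℂ) * (1 - (ρ : ℂ))) ^ ((1 : ℂ) / 2)) / (2 * (ρ : ℂ))

theorem stmt_12 (ρ : ℝ) (hρ : ρ ∈ Set.Ioo (0 : ℝ) (1 / 2)) (f g : ℝ)
    (hf : f < 0) (hg : g < 0) :
    Tendsto (fun ω : ℝ => (muMinus ρ f g ω - 1) / (ω : ℂ) ^ 2)
        (nhdsWithin 0 (Set.Ioi 0))
        (nhds (((-1 / ((2 * ρ - 1) * |f|) : ℝ) : ℂ))) ∧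
    Tendsto (fun ω : ℝ => (muPlus ρ f g ω - (((1 - ρ) / ρ : ℝ) : ℂ)) / (ω : ℂ) ^ 2)
        (nhdsWithin 0 (Set.Ioi 0))
        (nhds ((((1 - ρ) / ρ / ((2 * ρ - 1) * |f|) : ℝ) : ℂ))) := by
  obtain ⟨hρ0, hρ2⟩ := hρ
  have h12 : (0:ℝ) < 1 - 2*ρ := by linarith
  have hfC : (f:ℂ) ≠ 0 := by exact_mod_cast hf.ne
  have hρC : (ρ:ℂ) ≠ 0 := by exact_mod_cast hρ0.ne'
  have h12C : (1:ℂ) - 2*ρ ≠ 0 := by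
    intro h
    have : ((1 - 2*ρ : ℝ) : ℂ) = 0 := by push_cast; linear_combination h
    exact h12.ne' (by exact_mod_cast this)
  set d : ℝ → ℂ := fun ω => (f:ℂ) + Complex.I * ω * g with hd_def
  have hd_ne : ∀ ω, d ω ≠ 0 := by
    intro ω h
    have := congrArg Complex.re h
    simp [hd_def, Complex.add_re, Complex.mul_re] at this
    exact hf.ne this
  set w : ℝ → ℂ := fun ω => gam f g ω ^ 2 - 4 * (ρ:ℂ) * (1 - ρ) with hw_def
  set s : ℝ → ℂ := fun ω => w ω ^ ((1:ℂ)/2) with hs_def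
  have hgam_eq : ∀ ω, gam f g ω = (d ω + (ω:ℂ)^2) / (d ω) := by
    intro ω; rw [gam, hd_def]
  have hdc : Tendsto d (nhds 0) (nhds (f:ℂ)) := by
    have : Continuous d := by rw [hd_def]; continuity
    simpa [hd_def] using this.tendsto 0
  have hω2 : Tendsto (fun ω : ℝ => (ω:ℂ)^2) (nhds 0) (nhds 0) := by
    have : Continuous (fun ω : ℝ => (ω:ℂ)^2) := by continuity
    simpa using this.tendsto 0
  have hgam : Tendsto (fun ω => gam f g ω) (nhds 0) (nhds 1) := by
    have h1 : Tendsto (fun ω : ℝ => d ω + (ω:ℂ)^2) (nhds 0) (nhds (f:ℂ)) := by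
      simpa using hdc.add hω2
    have := h1.div hdc hfC
    rw [div_self hfC] at this
    exact this.congr fun ω => (hgam_eq ω).symm
  have hw : Tendsto w (nhds 0) (nhds (((1-2*ρ:ℝ)^2 : ℝ) : ℂ)) := by
    have := (hgam.pow 2).sub (tendsto_const_nhds (x := (4 * (ρ:ℂ) * (1 - ρ))))
    have e : (1:ℂ)^2 - 4 * (ρ:ℂ) * (1 - ρ) = (((1-2*ρ:ℝ)^2 : ℝ) : ℂ) := by
      push_cast; ring
    rwa [e] at this
  have hw0 : (((1-2*ρ:ℝ)^2 : ℝ) : ℂ) ≠ 0 := by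
    exact_mod_cast (pow_ne_zero 2 h12.ne')
  have hs0 : ((((1-2*ρ:ℝ)^2 : ℝ) : ℂ)) ^ ((1:ℂ)/2) = ((1-2*ρ : ℝ) : ℂ) := by
    rw [show ((1:ℂ)/2) = (((1/2:ℝ):ℝ):ℂ) by norm_num,
      ← Complex.ofReal_cpow (by positivity)]
    norm_cast
    rw [← Real.sqrt_eq_rpow, Real.sqrt_sq h12.le]
  have hs : Tendsto s (nhds 0) (nhds ((1-2*ρ : ℝ) : ℂ)) := by
    rw [← hs0]
    exact (continuousAt_cpow_const (Complex.mem_slitPlane_iff.mpr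
      (Or.inl (by rw [Complex.ofReal_re]; exact pow_pos h12 2)))).tendsto.comp hw
  have hs' : Tendsto s (nhds 0) (nhds (1 - 2*(ρ:ℂ))) := by
    convert hs using 2; push_cast; ring
  -- the limit denominators
  have hAlim : Tendsto (fun ω : ℝ => (1 - 2*(ρ:ℂ)) * d ω + (ω:ℂ)^2 + d ω * s ω)
      (nhds 0) (nhds (2 * (1 - 2*(ρ:ℂ)) * f)) := by
    have := ((tendsto_const_nhds (x := (1 - 2*(ρ:ℂ))).mul hdc).add hω2).add (hdc.mul hs')
    convert this using 1
    ring
  have hBlim : Tendsto (fun ω : ℝ => d ω * s ω + (1 - 2*(ρ:ℂ)) * d ω - (ω:ℂ)^2)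
      (nhds 0) (nhds (2 * (1 - 2*(ρ:ℂ)) * f)) := by
    have := ((hdc.mul hs').add (tendsto_const_nhds (x := (1 - 2*(ρ:ℂ))).mul hdc)).sub hω2
    convert this using 1
    ring
  have hA0 : (2 * ((1:ℂ) - 2*ρ) * f) ≠ 0 := by
    exact mul_ne_zero (mul_ne_zero two_ne_zero h12C) hfC
  have h2r1 : (2*(ρ:ℂ) - 1) ≠ 0 := by
    intro h; exact h12C (by linear_combination -h)
  have hnf : (-(f:ℂ)) ≠ 0 := neg_ne_zero.mpr hfC
  -- eventual facts
  have hwne : ∀ᶠ ω in nhdsWithin (0:ℝ) (Set.Ioi 0), w ω ≠ 0 :=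
    (hw.mono_left nhdsWithin_le_nhds).eventually_ne hw0
  have hAne : ∀ᶠ ω in nhdsWithin (0:ℝ) (Set.Ioi 0),
      (1 - 2*(ρ:ℂ)) * d ω + (ω:ℂ)^2 + d ω * s ω ≠ 0 :=
    ((hAlim.mono_left nhdsWithin_le_nhds)).eventually_ne hA0
  have hBne : ∀ᶠ ω in nhdsWithin (0:ℝ) (Set.Ioi 0),
      d ω * s ω + (1 - 2*(ρ:ℂ)) * d ω - (ω:ℂ)^2 ≠ 0 :=
    ((hBlim.mono_left nhdsWithin_le_nhds)).eventually_ne hA0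
  have hωpos : ∀ᶠ ω in nhdsWithin (0:ℝ) (Set.Ioi 0), ω ∈ Set.Ioi (0:ℝ) :=
    eventually_mem_nhdsWithin
  constructor
  · -- minus
    have hT : Tendsto (fun ω : ℝ => -2 / ((1 - 2*(ρ:ℂ)) * d ω + (ω:ℂ)^2 + d ω * s ω))
        (nhdsWithin (0:ℝ) (Set.Ioi 0)) (nhds (-2 / (2 * (1 - 2*(ρ:ℂ)) * f))) :=
      tendsto_const_nhds.div (hAlim.mono_left nhdsWithin_le_nhds) hA0
    have hval : ((-1 / ((2 * ρ - 1) * |f|) : ℝ) : ℂ) = -2 / (2 * (1 - 2*(ρ:ℂ)) * f) := by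
      rw [abs_of_neg hf]
      push_cast
      rw [div_eq_div_iff (mul_ne_zero h2r1 hnf) hA0]
      ring
    rw [hval]
    refine hT.congr' ?_
    filter_upwards [hwne, hAne, hωpos] with ω hwω hAω hωp
    have hωC : (ω:ℂ) ≠ 0 := by exact_mod_cast (ne_of_gt hωp)
    have hω2C : (ω:ℂ)^2 ≠ 0 := pow_ne_zero 2 hωC
    have hdω := hd_ne ω
    have hdG : gam f g ω * d ω = d ω + (ω:ℂ)^2 := by
      rw [hgam_eq ω, div_mul_cancel₀ _ hdω]
    have hsq : s ω ^ 2 = gam f g ω ^ 2 - 4 * (ρ:ℂ) * (1 - ρ) := by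
      rw [hs_def]
      simp only
      rw [sq, ← Complex.cpow_add _ _ hwω]
      norm_num
      rfl
    have key : (gam f g ω - 2*ρ - s ω) * ((1 - 2*(ρ:ℂ)) * d ω + (ω:ℂ)^2 + d ω * s ω)
        = -4 * ρ * (ω:ℂ)^2 := by
      linear_combination (-(gam f g ω + 2*(ρ:ℂ) - s ω)) * hdG + (-(d ω)) * hsq
    have hm : muMinus ρ f g ω - 1 = (gam f g ω - 2*ρ - s ω) / (2*ρ) := by
      rw [muMinus, show (gam f g ω ^ 2 - 4 * (ρ:ℂ) * (1 - ρ)) ^ ((1:ℂ)/2) = s ω from by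
        rw [hs_def, hw_def]]
      field_simp
      ring
    rw [eq_comm, hm, div_div, div_eq_div_iff (by exact mul_ne_zero (mul_ne_zero two_ne_zero hρC) hω2C) hAω]
    linear_combination key
  · -- plus
    have hT : Tendsto (fun ω : ℝ => 2 * (1 - (ρ:ℂ)) / ((ρ:ℂ) * (d ω * s ω + (1 - 2*(ρ:ℂ)) * d ω - (ω:ℂ)^2)))
        (nhdsWithin (0:ℝ) (Set.Ioi 0))
        (nhds (2 * (1 - (ρ:ℂ)) / ((ρ:ℂ) * (2 * (1 - 2*(ρ:ℂ)) * f)))) :=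
      tendsto_const_nhds.div
        ((tendsto_const_nhds (x := (ρ:ℂ))).mul (hBlim.mono_left nhdsWithin_le_nhds))
        (mul_ne_zero hρC hA0)
    have hval : (((1 - ρ) / ρ / ((2 * ρ - 1) * |f|) : ℝ) : ℂ)
        = 2 * (1 - (ρ:ℂ)) / ((ρ:ℂ) * (2 * (1 - 2*(ρ:ℂ)) * f)) := by
      rw [abs_of_neg hf]
      push_cast
      rw [div_div, div_eq_div_iff (mul_ne_zero hρC (mul_ne_zero h2r1 hnf))
        (mul_ne_zero hρC hA0)]
      ring
    rw [hval]
    refine hT.congr' ?_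
    filter_upwards [hwne, hBne, hωpos] with ω hwω hBω hωp
    have hωC : (ω:ℂ) ≠ 0 := by exact_mod_cast (ne_of_gt hωp)
    have hω2C : (ω:ℂ)^2 ≠ 0 := pow_ne_zero 2 hωC
    have hdω := hd_ne ω
    have hdG : gam f g ω * d ω = d ω + (ω:ℂ)^2 := by
      rw [hgam_eq ω, div_mul_cancel₀ _ hdω]
    have hsq : s ω ^ 2 = gam f g ω ^ 2 - 4 * (ρ:ℂ) * (1 - ρ) := by
      rw [hs_def]
      simp only
      rw [sq, ← Complex.cpow_add _ _ hwω]
      norm_num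
      rfl
    have key : (gam f g ω - 2*(1 - (ρ:ℂ)) + s ω) * (d ω * s ω + (1 - 2*(ρ:ℂ)) * d ω - (ω:ℂ)^2)
        = 4 * (1 - (ρ:ℂ)) * (ω:ℂ)^2 := by
      linear_combination (s ω + gam f g ω + 2 - 2*(ρ:ℂ)) * hdG + (d ω) * hsq
    have hm : muPlus ρ f g ω - (((1 - ρ) / ρ : ℝ) : ℂ) = (gam f g ω - 2*(1 - (ρ:ℂ)) + s ω) / (2*ρ) := by
      rw [muPlus, show (gam f g ω ^ 2 - 4 * (ρ:ℂ) * (1 - ρ)) ^ ((1:ℂ)/2) = s ω from by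
        rw [hs_def, hw_def]]
      push_cast
      field_simp
      ring
    rw [eq_comm, hm, div_div, div_eq_div_iff (by exact mul_ne_zero (mul_ne_zero two_ne_zero hρC) hω2C)
      (mul_ne_zero hρC hBω)]
    linear_combination (ρ:ℂ) * key
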